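/- Let H be a 3-uniform hypergraph and v a vertex. The Berge degree of v equals |N(v)| − tree(L(v)), where tree(L(v)) is the number of connected components of the link graph L(v) that are trees. -/

import Mathlib

open Finset

variable {V : Type} [DecidableEq V]

/-- A hypergraph (given by its edge set) is 3-uniform. -/
def Uniform3 (E : Finset (Finset V)) : Prop := ∀ e ∈ E, e.card = 3

/-- There is a Berge star `K_{1,m}` centered at `v`: `m` distinct leaves `y i`
and `m` distinct hyperedges `f i` with `{v, y i} ⊆ f i`. -/
def IsBergeStar (E : Finset (Finset V)) (v : V) (m : ℕ) : Prop :=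
  ∃ (y : Fin m → V) (f : Fin m → Finset V),
    Function.Injective y ∧ Function.Injective f ∧
    ∀ i, f i ∈ E ∧ v ∈ f i ∧ y i ∈ f i ∧ y i ≠ v

/-- The Berge degree of `v`: the largest `m` such that a Berge star `K_{1,m}`
centered at `v` exists. -/
noncomputable def bergeDeg (E : Finset (Finset V)) (v : V) : ℕ :=
  sSup {m | IsBergeStar E v m}

/-- The degree of `v`: the number of hyperedges containing `v`. -/
def hdeg (E : Finset (Finset V)) (v : V) : ℕ := (E.filter (fun e => v ∈ e)).card

/-- The neighborhood of `v`: vertices sharing an edge with `v`. -/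
def nbr (E : Finset (Finset V)) (v : V) : Finset V :=
  ((E.filter (fun e => v ∈ e)).biUnion id).erase v

/-- The link graph of `v`: graph on `N(v)` with `x ~ y` iff `{v,x,y} ∈ E`. -/
def linkGraph (E : Finset (Finset V)) (v : V) : SimpleGraph {x // x ∈ nbr E v} :=
  SimpleGraph.fromRel (fun a b => ({v, a.1, b.1} : Finset V) ∈ E)

/-- The number of connected components of the link graph of `v` that are trees. -/
noncomputable def treeCount (E : Finset (Finset V)) (v : V) : ℕ :=
  Nat.card {c : (linkGraph E v).ConnectedComponent //
    ((linkGraph E v).induce c.supp).IsTree}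

set_option linter.unusedSectionVars false

section GraphAux

open SimpleGraph

variable {W : Type} [DecidableEq W]

lemma exists_parent (G : SimpleGraph W) {r x : W} (hr : G.Reachable r x) (hx : x ≠ r) :
    ∃ y, G.Adj x y ∧ G.dist r y + 1 = G.dist r x := by
  obtain ⟨p, hp⟩ := hr.exists_walk_length_eq_dist
  obtain ⟨z, hadj, q, hq⟩ := SimpleGraph.Walk.exists_eq_cons_of_ne hx p.reverse
  refine ⟨z, hadj, ?_⟩
  have hlen : q.length + 1 = p.length := by
    have := congrArg SimpleGraph.Walk.length hq
    simpa [Nat.add_comm] using this.symm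
  have h1 : G.dist r z ≤ q.length := by
    simpa using SimpleGraph.dist_le q.reverse
  have h2 : G.dist r x ≤ G.dist r z + 1 := by
    obtain ⟨w, hw⟩ := (hr.trans hadj.reachable).exists_walk_length_eq_dist
    have := SimpleGraph.dist_le (w.concat hadj.symm)
    simpa [SimpleGraph.Walk.length_concat, hw] using this
  omega

set_option linter.unusedSectionVars false

lemma exists_cover (G : SimpleGraph W) (r : W) :
    ∃ φ : W → Sym2 W,
      (∀ x, G.Reachable r x → x ≠ r → φ x ∈ G.edgeSet ∧ x ∈ φ x) ∧
      (∀ x x', G.Reachable r x → x ≠ r → G.Reachable r x' → x' ≠ r → φ x = φ x' → x = x') := by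
  classical
  have key : ∀ x, ∃ y, (G.Reachable r x → x ≠ r → G.Adj x y ∧ G.dist r y + 1 = G.dist r x) := by
    intro x
    by_cases h : G.Reachable r x ∧ x ≠ r
    · obtain ⟨y, hy⟩ := exists_parent G h.1 h.2; exact ⟨y, fun _ _ => hy⟩
    · exact ⟨r, fun h1 h2 => absurd ⟨h1, h2⟩ h⟩
  choose p hp using key
  refine ⟨fun x => s(x, p x), ?_, ?_⟩
  · intro x h1 h2
    exact ⟨(SimpleGraph.mem_edgeSet G).mpr (hp x h1 h2).1, Sym2.mem_mk_left _ _⟩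
  · intro x x' h1 h2 h1' h2' heq
    rw [Sym2.eq_iff] at heq
    rcases heq with ⟨rfl, -⟩ | ⟨h3, h4⟩
    · rfl
    · exfalso
      have e1 := (hp x h1 h2).2
      have e1' := (hp x' h1' h2').2
      rw [← h3] at e1'
      rw [h4] at e1
      omega

lemma reachable_delete (G : SimpleGraph W) {u0 v0 : W}
    (h : (G.deleteEdges {s(u0, v0)}).Reachable u0 v0) {x y : W}
    (hxy : G.Reachable x y) : (G.deleteEdges {s(u0, v0)}).Reachable x y := by
  obtain ⟨w⟩ := hxy
  induction w with
  | nil => exact Reachable.refl _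
  | @cons a b c hadj p ih =>
    refine Reachable.trans ?_ ih
    by_cases hc : s(a, b) = s(u0, v0)
    · rw [Sym2.eq_iff] at hc
      rcases hc with ⟨rfl, rfl⟩ | ⟨rfl, rfl⟩
      · exact h
      · exact h.symm
    · exact SimpleGraph.Adj.reachable (by rw [SimpleGraph.deleteEdges_adj]; exact ⟨hadj, by simpa using hc⟩)

lemma induce_reachable (G : SimpleGraph W) {s : Set W}
    (hcl : ∀ ⦃a b : W⦄, G.Adj a b → a ∈ s → b ∈ s)
    {x y : W} (w : G.Walk x y) (hx : x ∈ s) (hy : y ∈ s) :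
    (G.induce s).Reachable ⟨x, hx⟩ ⟨y, hy⟩ := by
  induction w with
  | nil => exact Reachable.refl _
  | @cons a b c hadj p ih =>
    have hb : b ∈ s := hcl hadj hx
    refine Reachable.trans ?_ (ih hb hy)
    exact SimpleGraph.Adj.reachable (by simpa using hadj :
      (G.induce s).Adj ⟨a, hx⟩ ⟨b, hb⟩)

lemma supp_closed (G : SimpleGraph W) (c : G.ConnectedComponent)
    ⦃a b : W⦄ (hadj : G.Adj a b) (ha : a ∈ c.supp) : b ∈ c.supp := by
  rw [SimpleGraph.ConnectedComponent.mem_supp_iff] at ha ⊢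
  rw [← ha]
  exact SimpleGraph.ConnectedComponent.eq.mpr hadj.symm.reachable

lemma reachable_of_mem_supp (G : SimpleGraph W) {c : G.ConnectedComponent}
    {x y : W} (hx : x ∈ c.supp) (hy : y ∈ c.supp) : G.Reachable x y := by
  rw [SimpleGraph.ConnectedComponent.mem_supp_iff] at hx hy
  exact SimpleGraph.ConnectedComponent.eq.mp (hx.trans hy.symm)

lemma supp_connected (G : SimpleGraph W) (c : G.ConnectedComponent) :
    (G.induce c.supp).Connected := by
  obtain ⟨r, hr⟩ : ∃ v, G.connectedComponentMk v = c :=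
    SimpleGraph.ConnectedComponent.ind (fun v => ⟨v, rfl⟩) c
  haveI : Nonempty ↑c.supp := ⟨⟨r, hr⟩⟩
  apply SimpleGraph.Connected.mk
  rintro ⟨x, hx⟩ ⟨y, hy⟩
  obtain ⟨w⟩ := reachable_of_mem_supp G hx hy
  exact induce_reachable G (supp_closed G c) w hx hy

lemma comp_eq_of_mem_edge (G : SimpleGraph W) {e : Sym2 W} (he : e ∈ G.edgeSet)
    {x x' : W} (hx : x ∈ e) (hx' : x' ∈ e) :
    G.connectedComponentMk x = G.connectedComponentMk x' := by
  induction e with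
  | _ p q =>
    rw [SimpleGraph.mem_edgeSet] at he
    rw [Sym2.mem_iff] at hx hx'
    apply SimpleGraph.ConnectedComponent.eq.mpr
    rcases hx with rfl | rfl <;> rcases hx' with rfl | rfl
    · exact Reachable.refl _
    · exact he.reachable
    · exact he.symm.reachable
    · exact Reachable.refl _

lemma cover_component (G : SimpleGraph W) (c : G.ConnectedComponent) {r : W} (hr : r ∈ c.supp) :
    ∃ φ : W → Sym2 W,
      (∀ x ∈ c.supp, x ≠ r → φ x ∈ G.edgeSet ∧ x ∈ φ x) ∧
      (∀ x ∈ c.supp, ∀ x' ∈ c.supp, x ≠ r → x' ≠ r → φ x = φ x' → x = x') := by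
  obtain ⟨φ, h1, h2⟩ := exists_cover G r
  exact ⟨φ, fun x hx hxr => h1 x (reachable_of_mem_supp G hr hx) hxr,
    fun x hx x' hx' hxr hxr' => h2 x x' (reachable_of_mem_supp G hr hx) hxr
      (reachable_of_mem_supp G hr hx') hxr'⟩

lemma del_reachable_of_induce_del {G : SimpleGraph W} {s : Set W} {a b : {x // x ∈ s}}
    {p q : {x // x ∈ s}}
    (h : ((G.induce s) \ fromEdgeSet {s(a, b)}).Reachable p q) :
    (G.deleteEdges {s(a.1, b.1)}).Reachable p.1 q.1 := by
  obtain ⟨w⟩ := h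
  induction w with
  | nil => exact Reachable.refl _
  | @cons x y z hadj p ih =>
    refine Reachable.trans ?_ ih
    rw [SimpleGraph.sdiff_adj] at hadj
    obtain ⟨h1, h2⟩ := hadj
    have hxy : G.Adj x.1 y.1 := by simpa using h1
    refine SimpleGraph.Adj.reachable ?_
    rw [SimpleGraph.deleteEdges_adj]
    refine ⟨hxy, ?_⟩
    simp only [Set.mem_singleton_iff]
    intro hcon
    apply h2
    rw [SimpleGraph.fromEdgeSet_adj]
    refine ⟨?_, h1.ne⟩
    · rw [Set.mem_singleton_iff]
      rw [Sym2.eq_iff] at hcon ⊢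
      rcases hcon with ⟨hc1, hc2⟩ | ⟨hc1, hc2⟩
      · exact Or.inl ⟨Subtype.ext hc1, Subtype.ext hc2⟩
      · exact Or.inr ⟨Subtype.ext hc1, Subtype.ext hc2⟩

lemma cover_component_cyclic (G : SimpleGraph W) (c : G.ConnectedComponent)
    (h : ¬ (G.induce c.supp).IsTree) :
    ∃ φ : W → Sym2 W,
      (∀ x ∈ c.supp, φ x ∈ G.edgeSet ∧ x ∈ φ x) ∧
      (∀ x ∈ c.supp, ∀ x' ∈ c.supp, φ x = φ x' → x = x') := by
  classical
  have hconn := supp_connected G c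
  have hNA : ¬ (G.induce c.supp).IsAcyclic := fun ha => h ⟨hconn, ha⟩
  rw [isAcyclic_iff_forall_adj_isBridge] at hNA
  push_neg at hNA
  obtain ⟨a, b, hab, hnb⟩ := hNA
  have hre : ((G.induce c.supp) \ fromEdgeSet {s(a, b)}).Reachable a b := by
    by_contra hcon
    exact hnb hcon
  have hre' : (G.deleteEdges {s(a.1, b.1)}).Reachable a.1 b.1 :=
    del_reachable_of_induce_del hre
  set G' := G.deleteEdges {s(a.1, b.1)} with hG'
  have hle : ∀ {x y : W}, G'.Adj x y → G.Adj x y := fun hxy =>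
    (SimpleGraph.deleteEdges_adj.mp hxy).1
  obtain ⟨φ, h1, h2⟩ := exists_cover G' a.1
  have hreach : ∀ x ∈ c.supp, G'.Reachable a.1 x := by
    intro x hx
    exact reachable_delete G hre' (reachable_of_mem_supp G a.2 hx)
  have hGab : G.Adj a.1 b.1 := by simpa using hab
  have hnotE : s(a.1, b.1) ∉ G'.edgeSet := by
    rw [SimpleGraph.mem_edgeSet, hG', SimpleGraph.deleteEdges_adj]
    simp
  refine ⟨fun x => if x = a.1 then s(a.1, b.1) else φ x, ?_, ?_⟩
  · intro x hx
    by_cases hxa : x = a.1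
    · subst hxa
      simp only [if_pos rfl]
      exact ⟨(SimpleGraph.mem_edgeSet G).mpr hGab, Sym2.mem_mk_left _ _⟩
    · simp only [if_neg hxa]
      obtain ⟨he, hm⟩ := h1 x (hreach x hx) hxa
      exact ⟨SimpleGraph.edgeSet_mono (SimpleGraph.deleteEdges_le _) he, hm⟩
  · intro x hx x' hx' heq
    simp only at heq
    by_cases hxa : x = a.1 <;> by_cases hxa' : x' = a.1
    · rw [hxa, hxa']
    · exfalso
      rw [if_pos hxa, if_neg hxa'] at heq
      exact hnotE (heq ▸ (h1 x' (hreach x' hx') hxa').1)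
    · exfalso
      rw [if_neg hxa, if_pos hxa'] at heq
      exact hnotE (heq ▸ (h1 x (hreach x hx) hxa).1)
    · rw [if_neg hxa, if_neg hxa'] at heq
      exact h2 x x' (hreach x hx) hxa (hreach x' hx') hxa' heq

lemma lower (G : SimpleGraph W) [Fintype W] :
    ∃ (S : Finset W) (φ : W → Sym2 W),
      S.card + Nat.card {c : G.ConnectedComponent // (G.induce c.supp).IsTree}
        = Fintype.card W ∧
      (∀ x ∈ S, φ x ∈ G.edgeSet ∧ x ∈ φ x) ∧
      (∀ x ∈ S, ∀ y ∈ S, φ x = φ y → x = y) := by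
  classical
  have hex : ∀ c : G.ConnectedComponent, ∃ v, G.connectedComponentMk v = c :=
    fun c => SimpleGraph.ConnectedComponent.ind (fun v => ⟨v, rfl⟩) c
  choose root hroot using hex
  have key : ∀ c : G.ConnectedComponent, ∃ φ : W → Sym2 W,
      (∀ x ∈ c.supp, ((G.induce c.supp).IsTree → x ≠ root c) → φ x ∈ G.edgeSet ∧ x ∈ φ x) ∧
      (∀ x ∈ c.supp, ∀ x' ∈ c.supp, ((G.induce c.supp).IsTree → x ≠ root c) →
        ((G.induce c.supp).IsTree → x' ≠ root c) → φ x = φ x' → x = x') := by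
    intro c
    by_cases htc : (G.induce c.supp).IsTree
    · have hrs : root c ∈ c.supp := hroot c
      obtain ⟨φ, h1, h2⟩ := cover_component G c hrs
      exact ⟨φ, fun x hx hc => h1 x hx (hc htc),
        fun x hx x' hx' hc hc' => h2 x hx x' hx' (hc htc) (hc' htc)⟩
    · obtain ⟨φ, h1, h2⟩ := cover_component_cyclic G c htc
      exact ⟨φ, fun x hx _ => h1 x hx, fun x hx x' hx' _ _ => h2 x hx x' hx'⟩
  choose Φ hΦ1 hΦ2 using key
  refine ⟨Set.toFinset {x : W |
      (G.induce (G.connectedComponentMk x).supp).IsTree →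
        x ≠ root (G.connectedComponentMk x)},
    fun x => Φ (G.connectedComponentMk x) x, ?_, ?_, ?_⟩
  · have hsplit := Set.ncard_add_ncard_compl {x : W |
      (G.induce (G.connectedComponentMk x).supp).IsTree →
        x ≠ root (G.connectedComponentMk x)}
    rw [Set.ncard_eq_toFinset_card'] at hsplit
    rw [Nat.card_eq_fintype_card (α := W)] at hsplit
    have hcompl : ({x : W |
        (G.induce (G.connectedComponentMk x).supp).IsTree →
          x ≠ root (G.connectedComponentMk x)}ᶜ).ncard
        = Nat.card {c : G.ConnectedComponent // (G.induce c.supp).IsTree} := by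
      rw [← Nat.card_coe_set_eq]
      refine Nat.card_congr ?_
      refine
        { toFun := fun x => ⟨G.connectedComponentMk x.1, ?_⟩
          invFun := fun c => ⟨root c.1, ?_⟩
          left_inv := ?_
          right_inv := ?_ }
      · have hx := x.2
        simp only [Set.mem_compl_iff, Set.mem_setOf_eq, _root_.not_imp, not_not] at hx
        exact hx.1
      · simp only [Set.mem_compl_iff, Set.mem_setOf_eq, _root_.not_imp, not_not]
        refine ⟨?_, ?_⟩
        · rw [hroot c.1]; exact c.2
        · exact congrArg root (hroot c.1).symm
      · rintro ⟨x, hx⟩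
        simp only [Set.mem_compl_iff, Set.mem_setOf_eq, _root_.not_imp, not_not] at hx
        exact Subtype.ext hx.2.symm
      · rintro ⟨c, hc⟩
        exact Subtype.ext (hroot c)
    rw [hcompl] at hsplit
    exact hsplit
  · intro x hx
    rw [Set.mem_toFinset, Set.mem_setOf_eq] at hx
    exact hΦ1 _ x rfl hx
  · intro x hx y hy heq
    simp only at heq
    rw [Set.mem_toFinset, Set.mem_setOf_eq] at hx hy
    have hxe := hΦ1 _ x rfl hx
    have hymem : y ∈ (G.connectedComponentMk y).supp := rfl
    have hye := hΦ1 _ y rfl hy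
    have hcomp : G.connectedComponentMk x = G.connectedComponentMk y := by
      have h1 : y ∈ Φ (G.connectedComponentMk x) x := by rw [heq]; exact hye.2
      exact comp_eq_of_mem_edge G hxe.1 hxe.2 h1
    refine hΦ2 (G.connectedComponentMk x) x rfl y ?_ hx ?_ ?_
    · rw [SimpleGraph.ConnectedComponent.mem_supp_iff]; exact hcomp.symm
    · rw [hcomp]; exact hy
    · rw [heq, hcomp]

lemma lift_edge (G : SimpleGraph W) (c : G.ConnectedComponent) {e : Sym2 W}
    (he : e ∈ G.edgeSet) {w : W} (hw : w ∈ e) (hwc : w ∈ c.supp) :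
    ∃ e' : Sym2 {x // x ∈ c.supp},
      e' ∈ (G.induce c.supp).edgeSet ∧ Sym2.map Subtype.val e' = e := by
  induction e with
  | _ p q =>
    rw [SimpleGraph.mem_edgeSet] at he
    have hpc : p ∈ c.supp := by
      rcases Sym2.mem_iff.mp hw with rfl | rfl
      · exact hwc
      · exact supp_closed G c he.symm hwc
    have hqc : q ∈ c.supp := supp_closed G c he hpc
    refine ⟨s(⟨p, hpc⟩, ⟨q, hqc⟩), ?_, ?_⟩
    · rw [SimpleGraph.mem_edgeSet]; simpa using he
    · rw [Sym2.map_pair_eq]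

lemma upper (G : SimpleGraph W) [Fintype W] {m : ℕ} (Y : Fin m → W) (F : Fin m → Sym2 W)
    (hY : Function.Injective Y) (hF : Function.Injective F)
    (hmem : ∀ i, F i ∈ G.edgeSet ∧ Y i ∈ F i) :
    m + Nat.card {c : G.ConnectedComponent // (G.induce c.supp).IsTree}
      ≤ Fintype.card W := by
  classical
  have hex : ∀ c : G.ConnectedComponent, ∃ v, G.connectedComponentMk v = c :=
    fun c => SimpleGraph.ConnectedComponent.ind (fun v => ⟨v, rfl⟩) c
  have step1 : ∀ c : G.ConnectedComponent, (G.induce c.supp).IsTree →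
      ∃ w ∈ c.supp, ∀ i, Y i ≠ w := by
    intro c hc
    obtain ⟨r, hr⟩ := hex c
    haveI : Fintype (G.induce c.supp).edgeSet := Fintype.ofFinite _
    have hcard := hc.card_edgeFinset
    set I : Finset (Fin m) := Finset.univ.filter (fun i => Y i ∈ c.supp) with hI
    have hchoice : ∀ i : Fin m, ∃ e' : Sym2 {x // x ∈ c.supp},
        (i ∈ I → e' ∈ (G.induce c.supp).edgeFinset ∧ Sym2.map Subtype.val e' = F i) := by
      intro i
      by_cases hi : i ∈ I
      · have hYc : Y i ∈ c.supp := by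
          rw [hI, Finset.mem_filter] at hi; exact hi.2
        obtain ⟨e', h1, h2⟩ := lift_edge G c (hmem i).1 (hmem i).2 hYc
        exact ⟨e', fun _ => ⟨SimpleGraph.mem_edgeFinset.mpr h1, h2⟩⟩
      · exact ⟨s(⟨r, hr⟩, ⟨r, hr⟩), fun h => absurd h hi⟩
    choose g hg using hchoice
    have hIle : I.card ≤ (G.induce c.supp).edgeFinset.card := by
      refine Finset.card_le_card_of_injOn g (fun i hi => (hg i hi).1) ?_
      intro i hi j hj hgij
      rw [Finset.mem_coe] at hi hj
      apply hF
      rw [← (hg i hi).2, ← (hg j hj).2, hgij]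
    have hsupp : Fintype.card {x // x ∈ c.supp} = (Set.toFinset c.supp).card :=
      (Set.toFinset_card _).symm
    have himage : Finset.image Y I ⊆ Set.toFinset c.supp := by
      intro w hw
      obtain ⟨i, hi, rfl⟩ := Finset.mem_image.mp hw
      rw [Set.mem_toFinset]
      rw [hI, Finset.mem_filter] at hi
      exact hi.2
    have hcardimage : (Finset.image Y I).card = I.card :=
      Finset.card_image_of_injective I hY
    have hlt : (Finset.image Y I).card < (Set.toFinset c.supp).card := by
      rw [hsupp] at hcard
      omega
    have hne : (Set.toFinset c.supp \ Finset.image Y I).Nonempty := by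
      rw [← Finset.card_pos, Finset.card_sdiff, Finset.inter_eq_left.mpr himage]
      omega
    obtain ⟨w, hw⟩ := hne
    rw [Finset.mem_sdiff] at hw
    refine ⟨w, Set.mem_toFinset.mp hw.1, fun i hiw => ?_⟩
    apply hw.2
    rw [Finset.mem_image]
    refine ⟨i, ?_, hiw⟩
    rw [hI, Finset.mem_filter]
    refine ⟨Finset.mem_univ _, ?_⟩
    rw [hiw]
    exact Set.mem_toFinset.mp hw.1
  haveI : Finite G.ConnectedComponent :=
    Finite.of_surjective G.connectedComponentMk (fun c => by
      obtain ⟨v, hv⟩ := hex c; exact ⟨v, hv⟩)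
  haveI : Fintype {c : G.ConnectedComponent // (G.induce c.supp).IsTree} :=
    Fintype.ofFinite _
  choose gT hgT1 hgT2 using
    fun c : {c : G.ConnectedComponent // (G.induce c.supp).IsTree} => step1 c.1 c.2
  have hgTinj : Function.Injective gT := by
    intro c c' hcc
    have h1 : gT c ∈ c.1.supp := hgT1 c
    have h2 : gT c' ∈ c'.1.supp := hgT1 c'
    rw [SimpleGraph.ConnectedComponent.mem_supp_iff] at h1 h2
    exact Subtype.ext (h1 ▸ hcc ▸ h2)
  have h1 : (Finset.univ.image Y).card = m := by
    rw [Finset.card_image_of_injective _ hY, Finset.card_univ, Fintype.card_fin]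
  have h2 : (Finset.univ.image gT).card
      = Nat.card {c : G.ConnectedComponent // (G.induce c.supp).IsTree} := by
    rw [Finset.card_image_of_injective _ hgTinj, Finset.card_univ,
      Nat.card_eq_fintype_card]
  have hdisj : Disjoint (Finset.univ.image Y) (Finset.univ.image gT) := by
    rw [Finset.disjoint_left]
    rintro w hw hw'
    obtain ⟨i, -, rfl⟩ := Finset.mem_image.mp hw
    obtain ⟨c, -, hc⟩ := Finset.mem_image.mp hw'
    exact hgT2 c i hc.symm
  calc m + Nat.card {c : G.ConnectedComponent // (G.induce c.supp).IsTree}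
      = (Finset.univ.image Y ∪ Finset.univ.image gT).card := by
        rw [Finset.card_union_of_disjoint hdisj, h1, h2]
    _ ≤ Fintype.card W := by
        rw [← Finset.card_univ]
        exact Finset.card_le_card (Finset.subset_univ _)


end GraphAux

open SimpleGraph

lemma mem_nbr_iff {E : Finset (Finset V)} {v x : V} :
    x ∈ nbr E v ↔ x ≠ v ∧ ∃ e, (e ∈ E ∧ v ∈ e) ∧ x ∈ e := by
  unfold nbr
  simp only [Finset.mem_erase, Finset.mem_biUnion, Finset.mem_filter, id]

lemma link_adj {E : Finset (Finset V)} {v : V} {a b : {x // x ∈ nbr E v}} :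
    (linkGraph E v).Adj a b ↔ a ≠ b ∧ ({v, a.1, b.1} : Finset V) ∈ E := by
  rw [linkGraph, SimpleGraph.fromRel_adj]
  constructor
  · rintro ⟨hne, h | h⟩
    · exact ⟨hne, h⟩
    · refine ⟨hne, ?_⟩
      rwa [Finset.pair_comm a.1 b.1]
  · rintro ⟨hne, h⟩
    exact ⟨hne, Or.inl h⟩

lemma third_vertex {E : Finset (Finset V)} (hU : Uniform3 E) {v y : V} {e : Finset V}
    (he : e ∈ E) (hv : v ∈ e) (hy : y ∈ e) (hyv : y ≠ v) :
    ∃ z, z ≠ v ∧ z ≠ y ∧ e = {v, y, z} := by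
  have hc3 : e.card = 3 := hU e he
  have hsub : ({v, y} : Finset V) ⊆ e := by
    intro w hw
    rcases Finset.mem_insert.mp hw with rfl | hw
    · exact hv
    · rw [Finset.mem_singleton.mp hw]; exact hy
  have hc2 : ({v, y} : Finset V).card = 2 := Finset.card_pair (Ne.symm hyv)
  have hd : (e \ {v, y}).card = 1 := by
    rw [Finset.card_sdiff, Finset.inter_eq_left.mpr hsub]
    omega
  obtain ⟨z, hz⟩ := Finset.card_eq_one.mp hd
  have hzmem : z ∈ e \ ({v, y} : Finset V) := by
    rw [hz]; exact Finset.mem_singleton_self z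
  rw [Finset.mem_sdiff] at hzmem
  obtain ⟨hze, hzn⟩ := hzmem
  simp only [Finset.mem_insert, Finset.mem_singleton] at hzn
  push_neg at hzn
  refine ⟨z, hzn.1, hzn.2, ?_⟩
  have hsub2 : ({v, y, z} : Finset V) ⊆ e := by
    intro w hw
    simp only [Finset.mem_insert, Finset.mem_singleton] at hw
    rcases hw with rfl | rfl | rfl
    · exact hv
    · exact hy
    · exact hze
  have hc3' : ({v, y, z} : Finset V).card = 3 := by
    rw [Finset.card_insert_of_notMem, Finset.card_insert_of_notMem,
      Finset.card_singleton]
    · simp only [Finset.mem_singleton]; exact Ne.symm hzn.2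
    · simp only [Finset.mem_insert, Finset.mem_singleton]
      push_neg
      exact ⟨Ne.symm hyv, Ne.symm hzn.1⟩
  exact (Finset.eq_of_subset_of_card_le hsub2 (by omega)).symm

def linkEdgeFinset {E : Finset (Finset V)} (v : V) :
    Sym2 {x // x ∈ nbr E v} → Finset V :=
  Sym2.lift ⟨fun a b => {v, a.1, b.1}, fun a b => by
    simp only []
    rw [Finset.pair_comm a.1 b.1]⟩

lemma linkEdgeFinset_mk {E : Finset (Finset V)} (v : V) (a b : {x // x ∈ nbr E v}) :
    linkEdgeFinset v s(a, b) = {v, a.1, b.1} := rfl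

lemma ne_v_of_mem_nbr {E : Finset (Finset V)} {v : V} {x : V} (hx : x ∈ nbr E v) :
    x ≠ v := (mem_nbr_iff.mp hx).1

lemma linkEdgeFinset_mem {E : Finset (Finset V)} {v : V} {e : Sym2 {x // x ∈ nbr E v}}
    (he : e ∈ (linkGraph E v).edgeSet) :
    linkEdgeFinset v e ∈ E ∧ v ∈ linkEdgeFinset v e ∧
      ∀ x, x ∈ e → x.1 ∈ linkEdgeFinset v e := by
  induction e with
  | _ a b =>
    rw [SimpleGraph.mem_edgeSet, link_adj] at he
    rw [linkEdgeFinset_mk]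
    refine ⟨he.2, by simp, ?_⟩
    intro x hx
    rcases Sym2.mem_iff.mp hx with rfl | rfl <;> simp

lemma linkEdgeFinset_inj {E : Finset (Finset V)} {v : V} :
    ∀ e1 e2 : Sym2 {x // x ∈ nbr E v}, e1 ∈ (linkGraph E v).edgeSet →
      e2 ∈ (linkGraph E v).edgeSet → linkEdgeFinset v e1 = linkEdgeFinset v e2 →
      e1 = e2 := by
  intro e1 e2
  refine Sym2.inductionOn₂ e1 e2 ?_
  intro a b c d he1 he2 heq
  rw [SimpleGraph.mem_edgeSet, link_adj] at he1 he2
  rw [linkEdgeFinset_mk, linkEdgeFinset_mk] at heq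
  have hav : a.1 ≠ v := ne_v_of_mem_nbr a.2
  have hbv : b.1 ≠ v := ne_v_of_mem_nbr b.2
  have ham : a.1 ∈ ({v, c.1, d.1} : Finset V) := by
    rw [← heq]; simp
  have hbm : b.1 ∈ ({v, c.1, d.1} : Finset V) := by
    rw [← heq]; simp
  simp only [Finset.mem_insert, Finset.mem_singleton] at ham hbm
  have hab : a ≠ b := he1.1
  rcases ham with h1 | h1 | h1
  · exact absurd h1 hav
  · -- a = c
    have hac : a = c := Subtype.ext h1
    rcases hbm with h2 | h2 | h2
    · exact absurd h2 hbv
    · exact absurd (hac.trans (Subtype.ext h2).symm) hab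
    · rw [hac, Subtype.ext h2]
  · -- a = d
    have had : a = d := Subtype.ext h1
    rcases hbm with h2 | h2 | h2
    · exact absurd h2 hbv
    · rw [had, Subtype.ext h2]
      exact Sym2.eq_swap
    · exact absurd (had.trans (Subtype.ext h2).symm) hab

lemma bergeStar_to_graph {E : Finset (Finset V)} (hU : Uniform3 E) {v : V} {m : ℕ}
    (h : IsBergeStar E v m) :
    ∃ (Y : Fin m → {x // x ∈ nbr E v}) (F : Fin m → Sym2 {x // x ∈ nbr E v}),
      Function.Injective Y ∧ Function.Injective F ∧
      ∀ i, F i ∈ (linkGraph E v).edgeSet ∧ Y i ∈ F i := by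
  obtain ⟨y, f, hy, hf, hprop⟩ := h
  have hynbr : ∀ i, y i ∈ nbr E v := fun i =>
    mem_nbr_iff.mpr ⟨(hprop i).2.2.2, f i, ⟨(hprop i).1, (hprop i).2.1⟩, (hprop i).2.2.1⟩
  have hz : ∀ i, ∃ z, z ≠ v ∧ z ≠ y i ∧ f i = {v, y i, z} := fun i =>
    third_vertex hU (hprop i).1 (hprop i).2.1 (hprop i).2.2.1 (hprop i).2.2.2
  choose z hz1 hz2 hz3 using hz
  have hznbr : ∀ i, z i ∈ nbr E v := fun i =>
    mem_nbr_iff.mpr ⟨hz1 i, f i, ⟨(hprop i).1, (hprop i).2.1⟩, by rw [hz3 i]; simp⟩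
  refine ⟨fun i => ⟨y i, hynbr i⟩, fun i => s(⟨y i, hynbr i⟩, ⟨z i, hznbr i⟩), ?_, ?_, ?_⟩
  · intro i j hij
    exact hy (congrArg Subtype.val hij)
  · intro i j hij
    apply hf
    have h1 := congrArg (linkEdgeFinset v) hij
    rw [linkEdgeFinset_mk, linkEdgeFinset_mk] at h1
    rw [hz3 i, hz3 j]
    exact h1
  · intro i
    constructor
    · rw [SimpleGraph.mem_edgeSet, link_adj]
      refine ⟨?_, ?_⟩
      · intro hc
        exact hz2 i (congrArg Subtype.val hc).symm
      · rw [← hz3 i]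
        exact (hprop i).1
    · exact Sym2.mem_mk_left _ _

lemma graph_to_bergeStar {E : Finset (Finset V)} {v : V} {m : ℕ}
    (Y : Fin m → {x // x ∈ nbr E v}) (F : Fin m → Sym2 {x // x ∈ nbr E v})
    (hY : Function.Injective Y) (hF : Function.Injective F)
    (hmem : ∀ i, F i ∈ (linkGraph E v).edgeSet ∧ Y i ∈ F i) :
    IsBergeStar E v m := by
  refine ⟨fun i => (Y i).1, fun i => linkEdgeFinset v (F i), ?_, ?_, ?_⟩
  · intro i j hij
    exact hY (Subtype.ext hij)
  · intro i j hij
    exact hF (linkEdgeFinset_inj _ _ (hmem i).1 (hmem j).1 hij)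
  · intro i
    obtain ⟨h1, h2, h3⟩ := linkEdgeFinset_mem (hmem i).1
    exact ⟨h1, h2, h3 _ (hmem i).2, ne_v_of_mem_nbr (Y i).2⟩

theorem stmt1 (E : Finset (Finset V)) (hU : Uniform3 E) (v : V) :
    bergeDeg E v = (nbr E v).card - treeCount E v := by
  classical
  have hcardW : Fintype.card {x // x ∈ nbr E v} = (nbr E v).card := Fintype.card_coe _
  obtain ⟨S, φ, hS, hφ1, hφ2⟩ := lower (linkGraph E v)
  have htdef : treeCount E v = Nat.card {c : (linkGraph E v).ConnectedComponent //
      ((linkGraph E v).induce c.supp).IsTree} := rfl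
  have hstar : IsBergeStar E v S.card := by
    refine graph_to_bergeStar (fun i => (S.equivFin.symm i).1)
      (fun i => φ (S.equivFin.symm i).1) ?_ ?_ ?_
    · intro i j hij
      exact S.equivFin.symm.injective (Subtype.ext hij)
    · intro i j hij
      have := hφ2 _ (S.equivFin.symm i).2 _ (S.equivFin.symm j).2 hij
      exact S.equivFin.symm.injective (Subtype.ext this)
    · intro i
      exact hφ1 _ (S.equivFin.symm i).2
  have hub : ∀ m ∈ {m | IsBergeStar E v m}, m ≤ (nbr E v).card - treeCount E v := by
    intro m hm
    obtain ⟨Y, F, hY, hF, hmem⟩ := bergeStar_to_graph hU hm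
    have := upper (linkGraph E v) Y F hY hF (fun i => hmem i)
    rw [hcardW, ← htdef] at this
    omega
  have hScard : S.card = (nbr E v).card - treeCount E v := by
    rw [hcardW, ← htdef] at hS
    omega
  rw [bergeDeg]
  apply le_antisymm
  · refine csSup_le ⟨0, ?_⟩ hub
    exact ⟨Fin.elim0, Fin.elim0, fun {i} => i.elim0, fun {i} => i.elim0, fun i => i.elim0⟩
  · refine le_csSup ⟨(nbr E v).card - treeCount E v, fun m hm => hub m hm⟩ ?_
    rw [← hScard]
    exact hstar
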